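/- arXiv:0808.2725 — 7 statements merged into one kernel-verified Lean document; each statement's English description precedes it below -/
import Mathlib

section
/- Let I = I_1 × ... × I_m be a finite product of finite sets, each of size at least 2. For a subset D of [m], let L_D ⊂ Q^I be the subspace of functions x : I → Q depending only on the coordinates in D. Then the set-wise stabilizer of L_D in the symmetric group on I equals the wreath product S_{I_{D^C}} wr S_{I_D}, i.e. the set of permutations g of I such that the D-components (g(i))_D of g(i) depend only on i_D. -/
open Finset

namespace Hier

variable {m : ℕ}

abbrev Cell (I : Fin m → ℕ) := ∀ j, Fin (I j)

variable (I : Fin m → ℕ)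

/-- standard inner product on ℚ^I -/
def dot (x y : Cell I → ℚ) : ℚ := ∑ i, x i * y i

/-- L_E: tables depending only on the coordinates in E -/
def LL (E : Finset (Fin m)) : Submodule ℚ (Cell I → ℚ) where
  carrier := {x | ∀ i i' : Cell I, (∀ j ∈ E, i j = i' j) → x i = x i'}
  zero_mem' := by intro i i' _; rfl
  add_mem' := by
    intro a b ha hb i i' h
    simp only [Pi.add_apply, ha i i' h, hb i i' h]
  smul_mem' := by
    intro c a ha i i' h
    simp only [Pi.smul_apply, ha i i' h]

/-- orthogonal complement w.r.t. the standard inner product -/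
def perp (S : Submodule ℚ (Cell I → ℚ)) : Submodule ℚ (Cell I → ℚ) where
  carrier := {y | ∀ x ∈ S, dot I x y = 0}
  zero_mem' := by intro x hx; simp [dot]
  add_mem' := by
    intro a b ha hb x hx
    have h1 := ha x hx
    have h2 := hb x hx
    simp only [dot, Pi.add_apply, mul_add, Finset.sum_add_distrib] at *
    rw [h1, h2]; ring
  smul_mem' := by
    intro c a ha x hx
    have h1 := ha x hx
    simp only [dot, Pi.smul_apply, smul_eq_mul] at *
    calc ∑ i, x i * (c * a i) = c * ∑ i, x i * a i := by
          rw [Finset.mul_sum]; congr 1; funext i; ring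
      _ = 0 := by rw [h1]; ring

/-- incremental subspace N_E -/
def NN (E : Finset (Fin m)) : Submodule ℚ (Cell I → ℚ) :=
  LL I E ⊓ perp I (⨆ j ∈ E, LL I (E.erase j))

/-- F-marginal of x evaluated at the marginal cell i_F -/
def marg (x : Cell I → ℚ) (F : Finset (Fin m)) (i : Cell I) : ℚ :=
  ∑ j : Cell I, if ∀ k ∈ F, j k = i k then x j else 0

/-- kernel of the configuration determined by a family of facets:
tables all of whose F-marginals vanish, F ∈ Fs -/
def kern (Fs : Finset (Finset (Fin m))) : Submodule ℚ (Cell I → ℚ) where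
  carrier := {y | ∀ F ∈ Fs, ∀ i, marg I y F i = 0}
  zero_mem' := by intro F hF i; simp [marg]
  add_mem' := by
    intro a b ha hb F hF i
    have h1 := ha F hF i
    have h2 := hb F hF i
    simp only [marg, Pi.add_apply] at *
    have key : (∑ j : Cell I, if ∀ k ∈ F, j k = i k then a j + b j else 0)
        = (∑ j : Cell I, if ∀ k ∈ F, j k = i k then a j else 0)
          + (∑ j : Cell I, if ∀ k ∈ F, j k = i k then b j else 0) := by
      rw [← Finset.sum_add_distrib]
      apply Finset.sum_congr rfl
      intro j _
      split <;> simp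
    rw [key, h1, h2]; ring
  smul_mem' := by
    intro c a ha F hF i
    have h1 := ha F hF i
    simp only [marg, Pi.smul_apply, smul_eq_mul] at *
    calc ∑ j : Cell I, (if ∀ k ∈ F, j k = i k then c * a j else 0)
        = c * ∑ j : Cell I, (if ∀ k ∈ F, j k = i k then a j else 0) := by
          rw [Finset.mul_sum]; congr 1; funext j; split <;> simp
      _ = 0 := by rw [h1]; ring

/-- a (finite) abstract simplicial complex on [m] -/
def IsComplex (Δ : Finset (Finset (Fin m))) : Prop :=
  ∀ F ∈ Δ, ∀ F' ⊆ F, F' ∈ Δ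

/-- the maximal elements (facets) of Δ -/
def facets (Δ : Finset (Finset (Fin m))) : Finset (Finset (Fin m)) :=
  Δ.filter (fun D => ∀ F ∈ Δ, D ⊆ F → F = D)

/-- row space of the hierarchical-model configuration A_Δ -/
def rowsp (Δ : Finset (Finset (Fin m))) : Submodule ℚ (Cell I → ℚ) :=
  ⨆ D ∈ facets Δ, LL I D

/-- single partial difference operator ∂_j -/
def pd1 (hI : ∀ j, 0 < I j) (j : Fin m) (x : Cell I → ℚ) : Cell I → ℚ :=
  fun i => x i - x (Function.update i j ⟨0, hI j⟩)

/-- ∂_E: composition of the (commuting) ∂_j, j ∈ E -/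
noncomputable def pdE (hI : ∀ j, 0 < I j) (E : Finset (Fin m)) : (Cell I → ℚ) → (Cell I → ℚ) :=
  E.toList.foldr (fun j f => pd1 I hI j ∘ f) id


/-- Proposition 1: the set-wise stabilizer of `L_D` in the symmetric group on the cells
equals the wreath product `S_{I_{D^C}} wr S_{I_D}`, i.e. the permutations `g` such that
the `D`-components of `g i` depend only on `i_D`. -/
theorem stmt3 (hI : ∀ j, 2 ≤ I j) (D : Finset (Fin m)) (g : Equiv.Perm (Cell I)) :
    ((fun x : Cell I → ℚ => x ∘ ⇑g.symm) '' (LL I D : Set (Cell I → ℚ))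
        = (LL I D : Set (Cell I → ℚ)))
    ↔ (∀ i i' : Cell I, (∀ j ∈ D, i j = i' j) → ∀ j ∈ D, g i j = g i' j) := by
  have hmem : ∀ x : Cell I → ℚ, x ∈ (LL I D : Set (Cell I → ℚ)) ↔
      ∀ i i' : Cell I, (∀ j ∈ D, i j = i' j) → x i = x i' := fun x => Iff.rfl
  constructor
  · intro hIm i i' hii
    by_contra hne
    push_neg at hne
    obtain ⟨j0, hj0, hne⟩ := hne
    set x : Cell I → ℚ := fun k => if ∀ l ∈ D, k l = g i l then 1 else 0 with hx
    have hxLL : x ∈ (LL I D : Set (Cell I → ℚ)) := by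
      rw [hmem]
      intro a b hab
      simp only [hx]
      congr 1
      simp only [eq_iff_iff]
      constructor
      · intro h l hl; rw [← hab l hl]; exact h l hl
      · intro h l hl; rw [hab l hl]; exact h l hl
    rw [← hIm] at hxLL
    obtain ⟨z, hz, hzx⟩ := hxLL
    have hzg : z = x ∘ ⇑g := by
      funext k
      have := congrFun hzx (g k)
      simpa using this
    rw [hmem] at hz
    have h1 : z i = z i' := hz i i' hii
    rw [hzg] at h1
    simp only [Function.comp_apply, hx] at h1
    rw [if_pos (fun l _ => trivial)] at h1
    rw [if_neg] at h1
    · exact one_ne_zero h1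
    · intro hcon
      exact hne (hcon j0 hj0).symm
  · intro h
    -- key: g.symm also preserves D-equivalence
    have hpos : ∀ j, 0 < I j := fun j => lt_of_lt_of_le two_pos (hI j)
    set p : Cell I → Cell I := fun i j => if j ∈ D then i j else ⟨0, hpos j⟩ with hp
    have hpD : ∀ (i : Cell I) (j : Fin m), j ∈ D → p i j = i j := by
      intro i j hj; simp [hp, hj]
    have hpp : ∀ i : Cell I, p (p i) = p i := by
      intro i; funext j; by_cases hj : j ∈ D <;> simp [hp, hj]
    have hpeq : ∀ a b : Cell I, (∀ j ∈ D, a j = b j) → p a = p b := by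
      intro a b hab; funext j; by_cases hj : j ∈ D <;> simp [hp, hj]
      exact hab j hj
    have hpg : ∀ a b : Cell I, p a = p b → p (g a) = p (g b) := by
      intro a b hab
      apply hpeq
      apply h
      intro l hl
      have := congrFun hab l
      simpa [hp, hl] using this
    have key : ∀ i i' : Cell I, (∀ j ∈ D, g i j = g i' j) → ∀ j ∈ D, i j = i' j := by
      intro i i' hgi
      let ψ : Set.range p → Set.range p := fun k => ⟨p (g k), ⟨g k, rfl⟩⟩
      have hsurj : Function.Surjective ψ := by
        rintro ⟨_, a, rfl⟩
        refine ⟨⟨p (g.symm a), ⟨g.symm a, rfl⟩⟩, ?_⟩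
        apply Subtype.ext
        show p (g (p (g.symm a))) = p a
        have h1 : p (g (p (g.symm a))) = p (g (g.symm a)) := hpg _ _ (hpp _)
        rw [h1, Equiv.apply_symm_apply]
      have hinj : Function.Injective ψ := Finite.injective_iff_surjective.mpr hsurj
      have hpii' : ψ ⟨p i, ⟨i, rfl⟩⟩ = ψ ⟨p i', ⟨i', rfl⟩⟩ := by
        apply Subtype.ext
        show p (g (p i)) = p (g (p i'))
        rw [hpg _ _ (hpp i), hpg _ _ (hpp i')]
        exact hpeq _ _ hgi
      have := hinj hpii'
      have hpe : p i = p i' := congrArg Subtype.val this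
      intro j hj
      have := congrFun hpe j
      rwa [hpD i j hj, hpD i' j hj] at this
    ext x
    constructor
    · rintro ⟨z, hz, rfl⟩
      rw [hmem] at hz ⊢
      intro a b hab
      simp only [Function.comp_apply]
      apply hz
      apply key
      intro j hj
      rw [Equiv.apply_symm_apply, Equiv.apply_symm_apply]
      exact hab j hj
    · intro hx
      refine ⟨x ∘ ⇑g, ?_, ?_⟩
      · rw [hmem] at hx ⊢
        intro a b hab
        exact hx _ _ (h a b hab)
      · funext k
        simp [Function.comp]


end Hier
end

section
/- Let I = I_1 × ... × I_m and for E ⊂ [m] let L_E ⊂ Q^I be the subspace of tables depending only on coordinates in E, and define the incremental subspace N_E = L_E ∩ (Σ_{j∈E} L_{E∖{j}})^⊥ for E nonempty and N_∅ = L_∅. Then N_E = L_E ∩ (Σ_{j∈E} L_{[m]∖{j}})^⊥. -/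
open Finset

namespace Hier

variable {m : ℕ}

variable (I : Fin m → ℕ)

lemma mem_LL {E : Finset (Fin m)} {x : Cell I → ℚ} :
    x ∈ LL I E ↔ ∀ i i' : Cell I, (∀ j ∈ E, i j = i' j) → x i = x i' := Iff.rfl

lemma LL_mono {E F : Finset (Fin m)} (h : E ⊆ F) : LL I E ≤ LL I F := by
  intro x hx i i' hagree
  exact hx i i' (fun k hk => hagree k (h hk))

/-- the submodule of vectors orthogonal to a fixed x (in the first slot) -/
def perpv (x : Cell I → ℚ) : Submodule ℚ (Cell I → ℚ) where
  carrier := {w | dot I w x = 0}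
  zero_mem' := by simp [dot]
  add_mem' := by
    intro a b ha hb
    simp only [Set.mem_setOf_eq, dot, Pi.add_apply, add_mul,
      Finset.sum_add_distrib] at *
    rw [ha, hb]; ring
  smul_mem' := by
    intro c a ha
    simp only [Set.mem_setOf_eq, dot, Pi.smul_apply, smul_eq_mul] at *
    calc ∑ i, c * a i * x i = c * ∑ i, a i * x i := by
          rw [Finset.mul_sum]; congr 1; funext i; ring
      _ = 0 := by rw [ha]; ring

lemma mem_perp_iSup {E : Finset (Fin m)} (M : Fin m → Submodule ℚ (Cell I → ℚ))
    (x : Cell I → ℚ) :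
    x ∈ perp I (⨆ j ∈ E, M j) ↔ ∀ j ∈ E, ∀ w ∈ M j, dot I w x = 0 := by
  constructor
  · intro h j hj w hw
    exact h w (Submodule.mem_iSup_of_mem j (Submodule.mem_iSup_of_mem hj hw))
  · intro h w hw
    have hle : (⨆ j ∈ E, M j) ≤ perpv I x :=
      iSup₂_le (fun j hj w hw => h j hj w hw)
    exact hle hw

lemma swap_eq_iff {α : Type*} [DecidableEq α] (a b x : α) :
    Equiv.swap a b x = b ↔ x = a := by
  constructor
  · intro h
    exact (Equiv.swap a b).injective (h.trans (Equiv.swap_apply_left a b).symm)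
  · rintro rfl
    exact Equiv.swap_apply_left _ _

/-- the E-marginal of a table not depending on coordinate j (with j ∈ E)
depends only on the coordinates in E \ {j} -/
lemma marg_mem_erase {E : Finset (Fin m)} {j : Fin m} (hj : j ∈ E)
    {z : Cell I → ℚ} (hz : z ∈ LL I (Finset.univ.erase j)) :
    marg I z E ∈ LL I (E.erase j) := by
  rw [mem_LL]
  intro i i' hagree
  unfold marg
  set σ : ∀ k, Fin (I k) ≃ Fin (I k) :=
    fun k => if k = j then Equiv.swap (i k) (i' k) else Equiv.refl _ with hσ
  refine Fintype.sum_equiv (Equiv.piCongrRight σ) _ _ (fun w => ?_)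
  have hewk : ∀ k, (Equiv.piCongrRight σ) w k = σ k (w k) := fun k => rfl
  have hzw : z ((Equiv.piCongrRight σ) w) = z w := by
    apply hz
    intro k hk
    have hkj : k ≠ j := (Finset.mem_erase.mp hk).1
    rw [hewk]; simp [hσ, hkj]
  have hcond : (∀ k ∈ E, w k = i k) ↔
      (∀ k ∈ E, (Equiv.piCongrRight σ) w k = i' k) := by
    constructor
    · intro h k hk
      rw [hewk]
      by_cases hkj : k = j
      · subst hkj
        simp only [hσ, if_pos rfl]
        rw [swap_eq_iff]
        exact h k hk
      · simp only [hσ, if_neg hkj, Equiv.refl_apply]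
        rw [h k hk]
        exact hagree k (Finset.mem_erase.mpr ⟨hkj, hk⟩)
    · intro h k hk
      have hk2 := h k hk; rw [hewk] at hk2
      by_cases hkj : k = j
      · subst hkj
        simp only [hσ, if_pos rfl] at hk2
        exact (swap_eq_iff _ _ _).mp hk2
      · simp only [hσ, if_neg hkj, Equiv.refl_apply] at hk2
        rw [hk2]
        exact (hagree k (Finset.mem_erase.mpr ⟨hkj, hk⟩)).symm
  by_cases hc : ∀ k ∈ E, w k = i k
  · rw [if_pos hc, if_pos (hcond.mp hc), hzw]
  · rw [if_neg hc, if_neg (fun h => hc (hcond.mpr h))]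

/-- the number of cells agreeing with a given cell on E does not depend
on the cell -/
lemma Nval_const (E : Finset (Fin m)) (c c' : Cell I) :
    (∑ i : Cell I, if ∀ k ∈ E, c k = i k then (1:ℚ) else 0)
      = ∑ i : Cell I, if ∀ k ∈ E, c' k = i k then (1:ℚ) else 0 := by
  set σ : ∀ k, Fin (I k) ≃ Fin (I k) :=
    fun k => if k ∈ E then Equiv.swap (c k) (c' k) else Equiv.refl _ with hσ
  refine Fintype.sum_equiv (Equiv.piCongrRight σ) _ _ (fun w => ?_)
  have hcond : (∀ k ∈ E, c k = w k) ↔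
      (∀ k ∈ E, c' k = (Equiv.piCongrRight σ) w k) := by
    constructor
    · intro h k hk
      have : (Equiv.piCongrRight σ) w k = σ k (w k) := rfl
      rw [this]
      simp only [hσ, if_pos hk]
      rw [eq_comm, swap_eq_iff]
      exact (h k hk).symm
    · intro h k hk
      have hk2 := h k hk
      have : (Equiv.piCongrRight σ) w k = σ k (w k) := rfl
      rw [this] at hk2
      simp only [hσ, if_pos hk] at hk2
      exact ((swap_eq_iff _ _ _).mp hk2.symm).symm
  by_cases hc : ∀ k ∈ E, c k = w k
  · rw [if_pos hc, if_pos (hcond.mp hc)]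
  · rw [if_neg hc, if_neg (fun h => hc (hcond.mpr h))]

lemma key (hI : ∀ j, 2 ≤ I j) {E : Finset (Fin m)} {j : Fin m} (hj : j ∈ E)
    {x : Cell I → ℚ} (hx : x ∈ LL I E)
    (hperp : ∀ w ∈ LL I (E.erase j), dot I w x = 0)
    {z : Cell I → ℚ} (hz : z ∈ LL I (Finset.univ.erase j)) :
    dot I z x = 0 := by
  have h0 : dot I (marg I z E) x = 0 := hperp _ (marg_mem_erase I hj hz)
  have i₀ : Cell I := fun k => ⟨0, lt_of_lt_of_le two_pos (hI k)⟩
  set N : ℚ := ∑ i : Cell I, if ∀ k ∈ E, i₀ k = i k then (1:ℚ) else 0 with hN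
  have hNpos : 0 < N := by
    rw [hN]
    apply Finset.sum_pos'
    · intro i _
      split <;> norm_num
    · exact ⟨i₀, Finset.mem_univ _, by simp⟩
  have hgroup : dot I (marg I z E) x = N * dot I z x := by
    unfold dot marg
    have step1 : ∀ i : Cell I,
        (∑ w : Cell I, if ∀ k ∈ E, w k = i k then z w else 0) * x i
          = ∑ w : Cell I, if ∀ k ∈ E, w k = i k then z w * x i else 0 := by
      intro i
      rw [Finset.sum_mul]
      apply Finset.sum_congr rfl
      intro w _
      split <;> simp
    calc (∑ i : Cell I,
            (∑ w : Cell I, if ∀ k ∈ E, w k = i k then z w else 0) * x i)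
        = ∑ i : Cell I, ∑ w : Cell I,
            (if ∀ k ∈ E, w k = i k then z w * x i else 0) := by
          exact Finset.sum_congr rfl (fun i _ => step1 i)
      _ = ∑ w : Cell I, ∑ i : Cell I,
            (if ∀ k ∈ E, w k = i k then z w * x i else 0) := Finset.sum_comm
      _ = ∑ w : Cell I, z w * x w
            * ∑ i : Cell I, (if ∀ k ∈ E, w k = i k then (1:ℚ) else 0) := by
          apply Finset.sum_congr rfl
          intro w _
          rw [Finset.mul_sum]
          apply Finset.sum_congr rfl
          intro i _
          split_ifs with hcnd
          · have hxw : x i = x w := hx i w (fun k hk => (hcnd k hk).symm)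
            rw [hxw]; ring
          · ring
      _ = ∑ w : Cell I, z w * x w * N := by
          apply Finset.sum_congr rfl
          intro w _
          rw [hN, Nval_const I E w i₀]
      _ = N * ∑ i : Cell I, z i * x i := by
          rw [Finset.mul_sum]
          apply Finset.sum_congr rfl
          intro w _
          ring
  rw [hgroup] at h0
  exact (mul_eq_zero.mp h0).resolve_left (ne_of_gt hNpos)

/-- Lemma 2 (1): `N_E = L_E ⊓ (Σ_{j∈E} L_{[m]∖{j}})^⊥`. -/
theorem stmt4 (hI : ∀ j, 2 ≤ I j) (E : Finset (Fin m)) :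
    NN I E = LL I E ⊓ perp I (⨆ j ∈ E, LL I (Finset.univ.erase j)) := by
  apply le_antisymm
  · intro x hx
    obtain ⟨hxL, hxP⟩ := Submodule.mem_inf.mp hx
    rw [Submodule.mem_inf]
    refine ⟨hxL, ?_⟩
    rw [mem_perp_iSup]
    intro j hj z hz
    have hperp : ∀ w ∈ LL I (E.erase j), dot I w x = 0 := by
      intro w hw
      exact (mem_perp_iSup I _ x).mp hxP j hj w hw
    exact key I hI hj hxL hperp hz
  · intro x hx
    obtain ⟨hxL, hxP⟩ := Submodule.mem_inf.mp hx
    rw [NN, Submodule.mem_inf]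
    refine ⟨hxL, ?_⟩
    rw [mem_perp_iSup]
    intro j hj w hw
    exact (mem_perp_iSup I _ x).mp hxP j hj w
      (LL_mono I (Finset.erase_subset_erase j (Finset.subset_univ E)) hw)


end Hier
end

section
/- With the incremental subspaces N_E = L_E ∩ (Σ_{j∈E} L_{E∖{j}})^⊥ (for E ≠ ∅) and N_∅ = L_∅, if E and F are distinct subsets of [m], then N_E and N_F are orthogonal subspaces of Q^I. -/
open Finset

namespace Hier

variable {m : ℕ}

variable (I : Fin m → ℕ)

lemma dot_comm (x y : Cell I → ℚ) : dot I x y = dot I y x :=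
  Finset.sum_congr rfl fun i _ => mul_comm _ _

lemma fib_card (F : Finset (Fin m)) (a b : Cell I) :
    (univ.filter fun i : Cell I => ∀ k ∈ F, i k = a k).card
      = (univ.filter fun i : Cell I => ∀ k ∈ F, i k = b k).card := by
  apply Finset.card_bij' (fun i _ => fun k => if k ∈ F then b k else i k)
    (fun i _ => fun k => if k ∈ F then a k else i k)
  · intro i hi
    simp only [mem_filter, mem_univ, true_and] at *
    intro k hk; simp [hk]
  · intro i hi
    simp only [mem_filter, mem_univ, true_and] at *
    intro k hk; simp [hk]
  · intro i hi
    simp only [mem_filter, mem_univ, true_and] at hi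
    funext k
    by_cases hk : k ∈ F <;> simp [hk, hi]
  · intro i hi
    simp only [mem_filter, mem_univ, true_and] at hi
    funext k
    by_cases hk : k ∈ F <;> simp [hk, hi]

lemma marg_mem {E : Finset (Fin m)} {x : Cell I → ℚ} (hx : x ∈ LL I E)
    (F : Finset (Fin m)) : marg I x F ∈ LL I (E ∩ F) := by
  intro i i' h
  unfold marg
  rw [← Finset.sum_filter, ← Finset.sum_filter]
  apply Finset.sum_bij' (fun jj _ => fun k => if k ∈ F then i' k else jj k)
    (fun jj _ => fun k => if k ∈ F then i k else jj k)
  · intro jj hjj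
    simp only [mem_filter, mem_univ, true_and] at *
    intro k hk; simp [hk]
  · intro jj hjj
    simp only [mem_filter, mem_univ, true_and] at *
    intro k hk; simp [hk]
  · intro jj hjj
    simp only [mem_filter, mem_univ, true_and] at hjj
    funext k
    by_cases hk : k ∈ F <;> simp [hk, hjj]
  · intro jj hjj
    simp only [mem_filter, mem_univ, true_and] at hjj
    funext k
    by_cases hk : k ∈ F <;> simp [hk, hjj]
  · intro jj hjj
    simp only [mem_filter, mem_univ, true_and] at hjj
    apply hx
    intro k hk
    by_cases hkF : k ∈ F
    · have hkEF : k ∈ E ∩ F := Finset.mem_inter.2 ⟨hk, hkF⟩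
      simp [hkF, ← h k hkEF, hjj k hkF]
    · simp [hkF]

lemma dot_marg {F : Finset (Fin m)} {x y : Cell I → ℚ} (hy : y ∈ LL I F)
    (a : Cell I) :
    dot I (marg I x F) y
      = ((univ.filter fun i : Cell I => ∀ k ∈ F, i k = a k).card : ℚ)
          * dot I x y := by
  unfold dot marg
  have step1 : ∀ i : Cell I,
      (∑ jj : Cell I, if ∀ k ∈ F, jj k = i k then x jj else 0) * y i
        = ∑ jj : Cell I, if ∀ k ∈ F, jj k = i k then x jj * y jj else 0 := by
    intro i
    rw [Finset.sum_mul]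
    apply Finset.sum_congr rfl
    intro jj _
    by_cases hcond : ∀ k ∈ F, jj k = i k
    · have : y jj = y i := hy jj i hcond
      simp [hcond, this]
    · simp [hcond]
  calc ∑ i : Cell I,
        (∑ jj : Cell I, if ∀ k ∈ F, jj k = i k then x jj else 0) * y i
      = ∑ i : Cell I, ∑ jj : Cell I,
          if ∀ k ∈ F, jj k = i k then x jj * y jj else 0 :=
        Finset.sum_congr rfl fun i _ => step1 i
    _ = ∑ jj : Cell I, ∑ i : Cell I,
          if ∀ k ∈ F, jj k = i k then x jj * y jj else 0 := Finset.sum_comm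
    _ = ∑ jj : Cell I,
          ((univ.filter fun i : Cell I => ∀ k ∈ F, i k = a k).card : ℚ)
            * (x jj * y jj) := by
        apply Finset.sum_congr rfl
        intro jj _
        have heq : (univ.filter fun i : Cell I => ∀ k ∈ F, jj k = i k)
            = univ.filter fun i : Cell I => ∀ k ∈ F, i k = jj k := by
          apply Finset.filter_congr
          intro i _
          constructor <;> intro h k hk <;> exact (h k hk).symm
        rw [← Finset.sum_filter, heq, Finset.sum_const, nsmul_eq_mul,
          fib_card I F jj a]
    _ = ((univ.filter fun i : Cell I => ∀ k ∈ F, i k = a k).card : ℚ)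
          * ∑ jj : Cell I, x jj * y jj := by
        rw [Finset.mul_sum]

lemma key_s5 (hI : ∀ j, 2 ≤ I j) {E F : Finset (Fin m)} {j : Fin m}
    (hjF : j ∈ F) (hjE : j ∉ E) :
    ∀ x ∈ LL I E, ∀ y ∈ NN I F, dot I x y = 0 := by
  intro x hx y hy
  obtain ⟨hyF, hyP⟩ := hy
  set a : Cell I := fun k => ⟨0, lt_of_lt_of_le two_pos (hI k)⟩ with ha
  have hcard : 0 < (univ.filter fun i : Cell I => ∀ k ∈ F, i k = a k).card :=
    Finset.card_pos.2 ⟨a, by simp⟩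
  have hsub : E ∩ F ⊆ F.erase j := by
    intro k hk
    have hk' := Finset.mem_inter.1 hk
    exact Finset.mem_erase.2 ⟨fun h => hjE (h ▸ hk'.1), hk'.2⟩
  have h1 : marg I x F ∈ LL I (F.erase j) :=
    LL_mono I hsub (marg_mem I hx F)
  have hmem : marg I x F ∈ (⨆ j ∈ F, LL I (F.erase j)) :=
    (le_iSup₂ (f := fun j _ => LL I (F.erase j)) j hjF :
      LL I (F.erase j) ≤ _) h1
  have h0 := hyP _ hmem
  rw [dot_marg I hyF a] at h0
  have hne : ((univ.filter fun i : Cell I => ∀ k ∈ F, i k = a k).card : ℚ) ≠ 0 :=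
    Nat.cast_ne_zero.2 hcard.ne'
  exact (mul_eq_zero.1 h0).resolve_left hne

/-- Lemma 2 (2): for distinct `E` and `F`, `N_E ⊥ N_F`. -/
theorem stmt5 (hI : ∀ j, 2 ≤ I j) (E F : Finset (Fin m)) (hEF : E ≠ F) :
    ∀ x ∈ NN I E, ∀ y ∈ NN I F, dot I x y = 0 := by
  intro x hx y hy
  have hEF' : ¬ ∀ a, a ∈ E ↔ a ∈ F := fun h => hEF (Finset.ext h)
  push_neg at hEF'
  obtain ⟨j, hj⟩ := hEF'
  rcases hj with ⟨hjE, hjF⟩ | ⟨hjE, hjF⟩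
  · rw [dot_comm]
    exact key_s5 I hI hjE hjF y hy.1 x hx
  · exact key_s5 I hI hjF hjE x hx.1 y hy


end Hier
end

section
/- Let Δ be a simplicial complex on [m] with facet set facet(Δ). Define fst(i) = {D ∈ facet(Δ) : i ∈ D}, the equivalence relation i ∼ j iff fst(i) = fst(j), the poset P of equivalence classes (pseudofactors) ordered by ρ ≥ ρ' iff fst(ρ) ⊇ fst(ρ'), and V(ρ) = ∪_{ρ' ≥ ρ} ρ'. Then V(ρ) = ∩_{D ∈ fst(ρ)} D, and V is an injective order-homomorphism from P into the intersection poset Q of facet(Δ) (the set of all intersections of subfamilies of facet(Δ), ordered by reverse inclusion). -/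
open Finset

namespace Hier

variable {m : ℕ}

variable (I : Fin m → ℕ)

/-- `fst_Δ(i)`: the facets of `Δ` containing the factor `i`. -/
def fstD (Δ : Finset (Finset (Fin m))) (i : Fin m) : Finset (Finset (Fin m)) :=
  (facets Δ).filter (fun D => i ∈ D)

/-- `V(ρ)` for the pseudofactor class of `i`: the union of all classes `ρ' ≥ ρ`. -/
def Vp (Δ : Finset (Finset (Fin m))) (i : Fin m) : Finset (Fin m) :=
  Finset.univ.filter (fun j => fstD Δ i ⊆ fstD Δ j)

/-- The intersection poset `Q` of `facet(Δ)`: all intersections of subfamilies of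
facets (the empty intersection being `[m]`). -/
def interPoset (Δ : Finset (Finset (Fin m))) : Finset (Finset (Fin m)) :=
  (facets Δ).powerset.image (fun S => Finset.univ.filter (fun k => ∀ D ∈ S, k ∈ D))

/-- Lemma 3: `V(ρ) = ∩_{D ∈ fst(ρ)} D`, and `V` is an injective order-homomorphism from
the pseudofactor poset into the intersection poset (ordered by reverse inclusion). -/
theorem stmt15 (Δ : Finset (Finset (Fin m))) (hΔ : IsComplex Δ) :
    (∀ i : Fin m, Vp Δ i = Finset.univ.filter (fun k => ∀ D ∈ fstD Δ i, k ∈ D)) ∧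
    (∀ i : Fin m, Vp Δ i ∈ interPoset Δ) ∧
    (∀ i i' : Fin m, fstD Δ i ⊆ fstD Δ i' → Vp Δ i' ⊆ Vp Δ i) ∧
    (∀ i i' : Fin m, fstD Δ i ≠ fstD Δ i' → Vp Δ i ≠ Vp Δ i') := by
  refine ⟨?_, ?_, ?_, ?_⟩
  · intro i
    ext k
    simp only [Vp, Finset.mem_filter, Finset.mem_univ, true_and]
    constructor
    · intro h D hD
      have := h hD
      simp only [fstD, Finset.mem_filter] at this
      exact this.2
    · intro h D hD
      simp only [fstD, Finset.mem_filter] at hD ⊢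
      exact ⟨hD.1, h D (by simp [fstD, Finset.mem_filter, hD.1, hD.2])⟩
  · intro i
    have h1 : Vp Δ i = Finset.univ.filter (fun k => ∀ D ∈ fstD Δ i, k ∈ D) := by
      ext k
      simp only [Vp, Finset.mem_filter, Finset.mem_univ, true_and]
      constructor
      · intro h D hD
        have := h hD
        simp only [fstD, Finset.mem_filter] at this
        exact this.2
      · intro h D hD
        simp only [fstD, Finset.mem_filter] at hD ⊢
        exact ⟨hD.1, h D (by simp [fstD, Finset.mem_filter, hD.1, hD.2])⟩
    rw [h1, interPoset, Finset.mem_image]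
    refine ⟨fstD Δ i, ?_, rfl⟩
    rw [Finset.mem_powerset]
    exact Finset.filter_subset _ _
  · intro i i' h j hj
    simp only [Vp, Finset.mem_filter, Finset.mem_univ, true_and] at hj ⊢
    exact h.trans hj
  · intro i i' hne heq
    apply hne
    have hi : i ∈ Vp Δ i := by
      simp [Vp, Finset.mem_filter]
    have hi' : i' ∈ Vp Δ i' := by
      simp [Vp, Finset.mem_filter]
    rw [heq] at hi
    rw [← heq] at hi'
    simp only [Vp, Finset.mem_filter, Finset.mem_univ, true_and] at hi hi'
    exact Finset.Subset.antisymm hi' hi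



end Hier
end

section
/- Let A and B be subsets of [m] and g a permutation of I = I_1 × ... × I_m. If (g(i))_A depends only on i_A and (g(i))_B depends only on i_B, then (g(i))_{A∩B} depends only on i_{A∩B}, and (g(i))_{A∪B} depends only on i_{A∪B}. -/
open Finset

namespace Hier

variable {m : ℕ}

variable (I : Fin m → ℕ)

/-- Lemma 5: if `(g i)_A` depends only on `i_A` and `(g i)_B` depends only on `i_B`,
then the same holds for `A ∩ B` and `A ∪ B`. -/
theorem stmt16 (g : Equiv.Perm (Cell I)) (A B : Finset (Fin m))
    (hA : ∀ i i' : Cell I, (∀ j ∈ A, i j = i' j) → ∀ j ∈ A, g i j = g i' j)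
    (hB : ∀ i i' : Cell I, (∀ j ∈ B, i j = i' j) → ∀ j ∈ B, g i j = g i' j) :
    (∀ i i' : Cell I, (∀ j ∈ A ∩ B, i j = i' j) → ∀ j ∈ A ∩ B, g i j = g i' j) ∧
    (∀ i i' : Cell I, (∀ j ∈ A ∪ B, i j = i' j) → ∀ j ∈ A ∪ B, g i j = g i' j) := by
  constructor
  · intro i i' h j hj
    rw [Finset.mem_inter] at hj
    set i'' : Cell I := fun k => if k ∈ A then i k else i' k with hi''
    have h1 : ∀ k ∈ A, i k = i'' k := by intro k hk; simp [hi'', hk]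
    have h2 : ∀ k ∈ B, i'' k = i' k := by
      intro k hk
      by_cases hkA : k ∈ A
      · simp only [hi'', if_pos hkA]
        exact h k (Finset.mem_inter.mpr ⟨hkA, hk⟩)
      · simp [hi'', hkA]
    calc g i j = g i'' j := hA i i'' h1 j hj.1
      _ = g i' j := hB i'' i' h2 j hj.2
  · intro i i' h j hj
    rcases Finset.mem_union.mp hj with hjA | hjB
    · exact hA i i' (fun k hk => h k (Finset.mem_union_left _ hk)) j hjA
    · exact hB i i' (fun k hk => h k (Finset.mem_union_right _ hk)) j hjB



end Hier
end

section
/- Let P be the pseudofactor poset of a simplicial complex Δ on [m], with A(ρ) = ∪_{ρ' > ρ} ρ' and V(ρ) = ρ ∪ A(ρ). Then the generalized wreath product W = ∏_{ρ∈P} (S_{I_ρ})^{I_{A(ρ)}}, acting on I by (wi)_ρ = w_ρ(i_{A(ρ)}) i_ρ, equals the set of permutations g of I such that (g(i))_{V(ρ)} depends only on i_{V(ρ)} for every ρ ∈ P. -/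
open Finset

namespace Hier

variable {m : ℕ}

variable (I : Fin m → ℕ)

/-- the ancestor set `A(ρ)` of the pseudofactor class of `j`:
the union of the classes strictly above it. -/
def Ap (Δ : Finset (Finset (Fin m))) (j : Fin m) : Finset (Fin m) :=
  Finset.univ.filter (fun k => fstD Δ j ⊂ fstD Δ k)

/-- Membership of a permutation `g` of the cells in the generalized wreath product
`∏_{ρ∈P} (S_{I_ρ})^{I_{A(ρ)}}` indexed by the pseudofactor poset `P`:
there is, for (each representative `j` of) each class `ρ`, a family `u j` of
permutations of the cells, depending only on the `A(ρ)`-coordinates of the argument,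
fixing all coordinates outside `ρ` and acting on the `ρ`-coordinates through the
`ρ`-coordinates only (i.e. a family in `(S_{I_ρ})^{I_{A(ρ)}}`), such that `g` acts by
`(g i)_ρ = w_ρ(i_{A(ρ)}) i_ρ`. -/
def InGWP (I : Fin m → ℕ) (Δ : Finset (Finset (Fin m))) (g : Equiv.Perm (Cell I)) : Prop :=
  ∃ u : Fin m → Cell I → Equiv.Perm (Cell I),
    (∀ j j' : Fin m, fstD Δ j = fstD Δ j' → u j = u j') ∧
    (∀ j : Fin m, ∀ i i' : Cell I, (∀ k ∈ Ap Δ j, i k = i' k) → u j i = u j i') ∧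
    (∀ j : Fin m, ∀ i x : Cell I, ∀ k : Fin m, fstD Δ k ≠ fstD Δ j → u j i x k = x k) ∧
    (∀ j : Fin m, ∀ i x x' : Cell I, (∀ k, fstD Δ k = fstD Δ j → x k = x' k) →
      ∀ k, fstD Δ k = fstD Δ j → u j i x k = u j i x' k) ∧
    (∀ i : Cell I, ∀ k : Fin m, g i k = u k i i k)

/-- If `g i` restricted to a set `S` depends only on `i` restricted to `S`,
then the induced map on restrictions is injective. -/
lemma res_inj {I : Fin m → ℕ} (hI : ∀ j, 0 < I j) (g : Equiv.Perm (Cell I))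
    (S : Finset (Fin m))
    (hcl : ∀ a b : Cell I, (∀ k ∈ S, a k = b k) → ∀ k ∈ S, g a k = g b k)
    (a b : Cell I) (hab : ∀ k ∈ S, g a k = g b k) : ∀ k ∈ S, a k = b k := by
  classical
  set res : Cell I → (∀ k : {k : Fin m // k ∈ S}, Fin (I k.1)) :=
    fun a k => a k.1 with hresdef
  set ext : (∀ k : {k : Fin m // k ∈ S}, Fin (I k.1)) → Cell I :=
    fun y k => if h : k ∈ S then y ⟨k, h⟩ else ⟨0, hI k⟩ with hextdef
  have hre : ∀ a : Cell I, ∀ k ∈ S, ext (res a) k = a k := by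
    intro a k hk; simp [hresdef, hextdef, hk]
  have hrex : ∀ y, res (ext y) = y := by
    intro y; funext k; simp [hresdef, hextdef, k.2]
  set G : (∀ k : {k : Fin m // k ∈ S}, Fin (I k.1)) →
      (∀ k : {k : Fin m // k ∈ S}, Fin (I k.1)) := fun y => res (g (ext y)) with hGdef
  have hGr : ∀ a : Cell I, G (res a) = res (g a) := by
    intro a; funext k
    exact hcl _ _ (hre a) k.1 k.2
  have hsurj : Function.Surjective G := by
    intro y
    refine ⟨res (g.symm (ext y)), ?_⟩
    rw [hGr, Equiv.apply_symm_apply, hrex]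
  have hinj : Function.Injective G := Finite.injective_iff_surjective.mpr hsurj
  have h1 : res (g a) = res (g b) := by
    funext k; exact hab k.1 k.2
  have h2 : res a = res b := hinj (by rw [hGr, hGr, h1])
  intro k hk
  exact congrFun h2 ⟨k, hk⟩

/-- Lemma 4 (Theorem B of Bailey 1983): the generalized wreath product over the
pseudofactor poset equals the set of permutations `g` such that `(g i)_{V(ρ)}` depends
only on `i_{V(ρ)}` for every pseudofactor `ρ`. -/
theorem stmt17 (hI : ∀ j, 2 ≤ I j) (Δ : Finset (Finset (Fin m))) (hΔ : IsComplex Δ)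
    (g : Equiv.Perm (Cell I)) :
    InGWP I Δ g ↔
    (∀ j : Fin m, ∀ i i' : Cell I,
      (∀ k ∈ Vp Δ j, i k = i' k) → ∀ k ∈ Vp Δ j, g i k = g i' k) := by
  classical
  have hI0 : ∀ j, 0 < I j := fun j => lt_of_lt_of_le (by norm_num) (hI j)
  have memVp : ∀ j k : Fin m, k ∈ Vp Δ j ↔ fstD Δ j ⊆ fstD Δ k := by
    intro j k; simp [Vp]
  have memAp : ∀ j k : Fin m, k ∈ Ap Δ j ↔ fstD Δ j ⊂ fstD Δ k := by
    intro j k; simp [Ap]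
  constructor
  · -- forward direction
    rintro ⟨u, hu1, hu2, hu3, hu4, hu5⟩ j i i' hagree k hk
    rw [memVp] at hk
    have step1 : u k i = u k i' := by
      apply hu2
      intro k'' hk''
      rw [memAp] at hk''
      exact hagree k'' ((memVp j k'').mpr (hk.trans hk''.subset))
    have step2 : u k i' i k = u k i' i' k := by
      apply hu4
      · intro k' hk'
        exact hagree k' ((memVp j k').mpr (hk' ▸ hk))
      · rfl
    rw [hu5 i k, hu5 i' k, step1, step2]
  · -- backward direction
    intro h
    -- closedness of V_ρ and A_ρ for an arbitrary family ρ of facets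
    set Vρ : Finset (Finset (Fin m)) → Finset (Fin m) :=
      fun ρ => Finset.univ.filter (fun k => ρ ⊆ fstD Δ k) with hVρdef
    set Aρ : Finset (Finset (Fin m)) → Finset (Fin m) :=
      fun ρ => Finset.univ.filter (fun k => ρ ⊂ fstD Δ k) with hAρdef
    have memVρ : ∀ ρ k, k ∈ Vρ ρ ↔ ρ ⊆ fstD Δ k := by
      intro ρ k; simp [hVρdef]
    have memAρ : ∀ ρ k, k ∈ Aρ ρ ↔ ρ ⊂ fstD Δ k := by
      intro ρ k; simp [hAρdef]
    have hclV : ∀ ρ, ∀ a b : Cell I, (∀ k ∈ Vρ ρ, a k = b k) →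
        ∀ k ∈ Vρ ρ, g a k = g b k := by
      intro ρ a b hab k hk
      rw [memVρ] at hk
      refine h k a b ?_ k ((memVp k k).mpr subset_rfl)
      intro k' hk'
      rw [memVp] at hk'
      exact hab k' ((memVρ ρ k').mpr (hk.trans hk'))
    have hclA : ∀ ρ, ∀ a b : Cell I, (∀ k ∈ Aρ ρ, a k = b k) →
        ∀ k ∈ Aρ ρ, g a k = g b k := by
      intro ρ a b hab k hk
      rw [memAρ] at hk
      refine h k a b ?_ k ((memVp k k).mpr subset_rfl)
      intro k' hk'
      rw [memVp] at hk'
      exact hab k' ((memAρ ρ k').mpr (lt_of_lt_of_le hk hk'))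
    -- the blending map and the candidate permutation family
    set B : Finset (Finset (Fin m)) → Cell I → Cell I → Cell I :=
      fun ρ i x k => if fstD Δ k = ρ then x k else i k with hBdef
    set F : Finset (Finset (Fin m)) → Cell I → Cell I → Cell I :=
      fun ρ i x k => if fstD Δ k = ρ then g (B ρ i x) k else x k with hFdef
    -- key agreement: g (B ρ i x) and g (B ρ i' x') agree on V_ρ when appropriate
    have hBA : ∀ ρ i x x', (∀ k, fstD Δ k ≠ ρ → B ρ i x k = B ρ i x' k) := by
      intro ρ i x x' k hk; simp [hBdef, hk]
    have hinj : ∀ ρ i, Function.Injective (F ρ i) := by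
      intro ρ i x x' hxx'
      have houtside : ∀ k, fstD Δ k ≠ ρ → x k = x' k := by
        intro k hk
        have := congrFun hxx' k
        simpa [hFdef, hk] using this
      have hA : ∀ k ∈ Aρ ρ, g (B ρ i x) k = g (B ρ i x') k := by
        apply hclA
        intro k hk
        rw [memAρ] at hk
        exact hBA ρ i x x' k (fun hc => (hc ▸ hk).ne rfl)
      have hV : ∀ k ∈ Vρ ρ, g (B ρ i x) k = g (B ρ i x') k := by
        intro k hk
        rw [memVρ] at hk
        by_cases hc : fstD Δ k = ρ
        · have := congrFun hxx' k
          simpa [hFdef, hc] using this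
        · exact hA k ((memAρ ρ k).mpr (lt_of_le_of_ne hk (fun e => hc e.symm)))
      have hBV : ∀ k ∈ Vρ ρ, B ρ i x k = B ρ i x' k :=
        res_inj hI0 g (Vρ ρ) (hclV ρ) _ _ hV
      funext k
      by_cases hc : fstD Δ k = ρ
      · have := hBV k ((memVρ ρ k).mpr (by rw [hc]))
        simpa [hBdef, hc] using this
      · exact houtside k hc
    have hbij : ∀ ρ i, Function.Bijective (F ρ i) := by
      intro ρ i
      exact Finite.injective_iff_bijective.mp (hinj ρ i)
    refine ⟨fun j i => Equiv.ofBijective (F (fstD Δ j) i) (hbij (fstD Δ j) i),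
      ?_, ?_, ?_, ?_, ?_⟩
    · intro j j' hjj'
      funext i
      apply Equiv.ext
      intro x
      simp only [Equiv.ofBijective_apply, hjj']
    · -- depends only on ancestor coordinates
      intro j i i' hii'
      apply Equiv.ext
      intro x
      simp only [Equiv.ofBijective_apply]
      set ρ := fstD Δ j with hρ
      funext k
      by_cases hc : fstD Δ k = ρ
      · have hBagree : ∀ k' ∈ Vρ ρ, B ρ i x k' = B ρ i' x k' := by
          intro k' hk'
          rw [memVρ] at hk'
          by_cases hc' : fstD Δ k' = ρ
          · simp [hBdef, hc']
          · have : k' ∈ Ap Δ j := by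
              rw [memAp, ← hρ]
              exact lt_of_le_of_ne hk' (fun e => hc' e.symm)
            simp [hBdef, hc', hii' k' this]
        have := hclV ρ _ _ hBagree k ((memVρ ρ k).mpr (by rw [hc]))
        simp [hFdef, hc, this]
      · simp [hFdef, hc]
    · -- fixes coordinates outside the class
      intro j i x k hk
      simp [Equiv.ofBijective_apply, hFdef, hk]
    · -- acts through the class coordinates only
      intro j i x x' hxx' k hk
      have hBeq : B (fstD Δ j) i x = B (fstD Δ j) i x' := by
        funext k'
        by_cases hc' : fstD Δ k' = fstD Δ j
        · simp [hBdef, hc', hxx' k' hc']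
        · simp [hBdef, hc']
      simp [Equiv.ofBijective_apply, hFdef, hk, hBeq]
    · -- the action formula
      intro i k
      have hBi : B (fstD Δ k) i i = i := by
        funext k'; simp [hBdef]
      simp [Equiv.ofBijective_apply, hFdef, hBi]


end Hier
end

section
/- Let Δ be a simplicial complex on [m] and P its pseudofactor poset. Then the intersection over the facets D of Δ of the wreath products S_{I_{D^C}} wr S_{I_D} (each viewed as a subgroup of the symmetric group on I) equals the generalized wreath product ∏_{ρ∈P} (S_{I_ρ})^{I_{A(ρ)}} indexed by P. -/
open Finset

namespace Hier

variable {m : ℕ}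

variable (I : Fin m → ℕ)

/-- membership of `g` in the intersection of the wreath products -/
def Wr (Δ : Finset (Finset (Fin m))) (g : Equiv.Perm (Cell I)) : Prop :=
  ∀ D ∈ facets Δ, ∀ i i' : Cell I, (∀ j ∈ D, i j = i' j) → ∀ j ∈ D, g i j = g i' j

lemma lemA_aux {Δ : Finset (Finset (Fin m))} {g : Equiv.Perm (Cell I)} (hg : Wr I Δ g) :
    ∀ S : Finset (Finset (Fin m)), S ⊆ facets Δ →
    ∀ i i' : Cell I, (∀ l, (∀ D ∈ S, l ∈ D) → i l = i' l) →
    ∀ k, (∀ D ∈ S, k ∈ D) → g i k = g i' k := by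
  intro S
  induction S using Finset.induction_on with
  | empty =>
      intro _ i i' h k _
      have : i = i' := funext fun l => h l (by simp)
      rw [this]
  | @insert D T hD ih =>
      intro hsub i i' h k hk
      have hDf : D ∈ facets Δ := hsub (Finset.mem_insert_self D T)
      set i'' : Cell I := fun l => if l ∈ D then i l else i' l with hi''
      have h1 : g i k = g i'' k := by
        refine hg D hDf i i'' (fun l hl => ?_) k (hk D (Finset.mem_insert_self D T))
        simp [hi'', hl]
      have h2 : g i'' k = g i' k := by
        refine ih (fun F hF => hsub (Finset.mem_insert_of_mem hF)) i'' i' (fun l hl => ?_)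
          k (fun F hF => hk F (Finset.mem_insert_of_mem hF))
        by_cases hlD : l ∈ D
        · have : i l = i' l := h l (by
            intro F hF
            rcases Finset.mem_insert.mp hF with rfl | hF'
            · exact hlD
            · exact hl F hF')
          simp [hi'', hlD, this]
        · simp [hi'', hlD]
      exact h1.trans h2

lemma lemA {Δ : Finset (Finset (Fin m))} {g : Equiv.Perm (Cell I)} (hg : Wr I Δ g)
    (k : Fin m) (i i' : Cell I) (h : ∀ l ∈ Vp Δ k, i l = i' l) : g i k = g i' k := by
  refine lemA_aux I hg (fstD Δ k) (fun D hD => (Finset.mem_filter.mp hD).1) i i'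
    (fun l hl => ?_) k (fun D hD => (Finset.mem_filter.mp hD).2)
  refine h l (Finset.mem_filter.mpr ⟨Finset.mem_univ _, fun D hD => ?_⟩)
  exact Finset.mem_filter.mpr ⟨(Finset.mem_filter.mp hD).1, hl D hD⟩

lemma Vp_mono {Δ : Finset (Finset (Fin m))} {k l : Fin m} (hl : l ∈ Vp Δ k) :
    Vp Δ l ⊆ Vp Δ k := by
  intro t ht
  have h1 := (Finset.mem_filter.mp hl).2
  have h2 := (Finset.mem_filter.mp ht).2
  exact Finset.mem_filter.mpr ⟨Finset.mem_univ _, h1.trans h2⟩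

lemma lemA' {Δ : Finset (Finset (Fin m))} {g : Equiv.Perm (Cell I)} (hg : Wr I Δ g)
    (k : Fin m) (i i' : Cell I) (h : ∀ l ∈ Vp Δ k, i l = i' l) :
    ∀ l ∈ Vp Δ k, g i l = g i' l := fun l hl =>
  lemA I hg l i i' (fun t ht => h t (Vp_mono hl ht))

lemma lemB {Δ : Finset (Finset (Fin m))} {g : Equiv.Perm (Cell I)} (hg : Wr I Δ g)
    (d : Cell I) (k : Fin m) (i i' : Cell I)
    (h : ∀ l ∈ Vp Δ k, g i l = g i' l) : ∀ l ∈ Vp Δ k, i l = i' l := by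
  classical
  let T := ∀ l : {l : Fin m // l ∈ Vp Δ k}, Fin (I l.1)
  let ext : T → Cell I := fun t l => if hl : l ∈ Vp Δ k then t ⟨l, hl⟩ else d l
  let res : Cell I → T := fun x l => x l.1
  let F : T → T := fun t => res (g (ext t))
  have key : ∀ x : Cell I, F (res x) = res (g x) := by
    intro x; funext l
    exact lemA' I hg k (ext (res x)) x (fun t ht => dif_pos ht) l.1 l.2
  have hre : ∀ t : T, res (ext t) = t := by
    intro t; funext l
    simp only [res, ext, dif_pos l.2]
  have hsurj : Function.Surjective F := by
    intro t
    refine ⟨res (g.symm (ext t)), ?_⟩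
    rw [key, g.apply_symm_apply]
    exact hre t
  have hinj : Function.Injective F := Finite.injective_iff_surjective.mpr hsurj
  have hres : res i = res i' := by
    apply hinj
    rw [key, key]
    funext l
    exact h l.1 l.2
  intro l hl
  exact congrFun hres ⟨l, hl⟩

/-- the candidate component map of the generalized wreath product -/
def vmap (Δ : Finset (Finset (Fin m))) (g : Equiv.Perm (Cell I)) (j : Fin m)
    (i x : Cell I) : Cell I :=
  fun l => if fstD Δ l = fstD Δ j then
    g (fun t => if fstD Δ t = fstD Δ j then x t else i t) l else x l

lemma vmap_inj {Δ : Finset (Finset (Fin m))} {g : Equiv.Perm (Cell I)} (hg : Wr I Δ g)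
    (d : Cell I) (j : Fin m) (i : Cell I) : Function.Injective (vmap I Δ g j i) := by
  intro x x' hxx
  set z : Cell I := fun t => if fstD Δ t = fstD Δ j then x t else i t with hz
  set z' : Cell I := fun t => if fstD Δ t = fstD Δ j then x' t else i t with hz'
  have hgz : ∀ l ∈ Vp Δ j, g z l = g z' l := by
    intro l hl
    by_cases hc : fstD Δ l = fstD Δ j
    · have := congrFun hxx l
      simpa [vmap, hc, hz, hz'] using this
    · refine lemA I hg l z z' (fun t ht => ?_)
      have h1 : fstD Δ j ⊆ fstD Δ l := (Finset.mem_filter.mp hl).2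
      have h2 : fstD Δ l ⊆ fstD Δ t := (Finset.mem_filter.mp ht).2
      have hne : fstD Δ t ≠ fstD Δ j := fun he =>
        hc (Finset.Subset.antisymm (he ▸ h2) h1)
      simp [hz, hz', hne]
  have hzz : ∀ l ∈ Vp Δ j, z l = z' l := lemB I hg d j z z' hgz
  funext k
  by_cases hc : fstD Δ k = fstD Δ j
  · have hk : k ∈ Vp Δ j :=
      Finset.mem_filter.mpr ⟨Finset.mem_univ _, by rw [hc]⟩
    have := hzz k hk
    simpa [hz, hz', hc] using this
  · have := congrFun hxx k
    simpa [vmap, hc] using this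

noncomputable def umap {Δ : Finset (Finset (Fin m))} {g : Equiv.Perm (Cell I)}
    (hg : Wr I Δ g) (d : Cell I) (j : Fin m) (i : Cell I) : Equiv.Perm (Cell I) :=
  Equiv.ofBijective (vmap I Δ g j i)
    (Finite.injective_iff_bijective.mp (vmap_inj I hg d j i))

lemma umap_apply {Δ : Finset (Finset (Fin m))} {g : Equiv.Perm (Cell I)}
    (hg : Wr I Δ g) (d : Cell I) (j : Fin m) (i x : Cell I) :
    umap I hg d j i x = vmap I Δ g j i x := rfl

/-- Theorem 2: the intersection over the facets `D` of the wreath products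
`S_{I_{D^C}} wr S_{I_D}` (permutations whose `D`-components depend only on `i_D`)
equals the generalized wreath product indexed by the pseudofactor poset. -/
theorem stmt18 (hI : ∀ j, 2 ≤ I j) (Δ : Finset (Finset (Fin m))) (hΔ : IsComplex Δ)
    (g : Equiv.Perm (Cell I)) :
    (∀ D ∈ facets Δ, ∀ i i' : Cell I,
        (∀ j ∈ D, i j = i' j) → ∀ j ∈ D, g i j = g i' j)
    ↔ InGWP I Δ g := by
  classical
  have d : Cell I := fun j => ⟨0, lt_of_lt_of_le two_pos (hI j)⟩
  constructor
  · intro hg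
    refine ⟨fun j i => umap I (Δ := Δ) (g := g) hg d j i, ?_, ?_, ?_, ?_, ?_⟩
    · -- depends only on the class of j
      intro j j' h
      funext i
      apply Equiv.ext
      intro x
      show vmap I Δ g j i x = vmap I Δ g j' i x
      funext l
      simp only [vmap, h]
    · -- depends only on the A(ρ)-coordinates of i
      intro j i i' h
      apply Equiv.ext
      intro x
      show vmap I Δ g j i x = vmap I Δ g j i' x
      funext l
      by_cases hc : fstD Δ l = fstD Δ j
      · simp only [vmap, if_pos hc]
        refine lemA I hg l _ _ (fun t ht => ?_)
        by_cases hto : fstD Δ t = fstD Δ j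
        · simp [hto]
        · have h1 : fstD Δ l ⊆ fstD Δ t := (Finset.mem_filter.mp ht).2
          have hss : fstD Δ j ⊂ fstD Δ t := by
            refine Finset.ssubset_iff_subset_ne.mpr ⟨hc ▸ h1, fun he => hto he.symm⟩
          have := h t (Finset.mem_filter.mpr ⟨Finset.mem_univ _, hss⟩)
          simp [hto, this]
      · simp only [vmap, if_neg hc]
    · -- fixes coordinates outside the class
      intro j i x k h
      show vmap I Δ g j i x k = x k
      simp only [vmap, if_neg h]
    · -- acts on the class coordinates through the class coordinates
      intro j i x x' h k hk
      show vmap I Δ g j i x k = vmap I Δ g j i x' k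
      have : (fun t => if fstD Δ t = fstD Δ j then x t else i t)
           = (fun t => if fstD Δ t = fstD Δ j then x' t else i t) := by
        funext t
        by_cases ht : fstD Δ t = fstD Δ j
        · simp [ht, h t ht]
        · simp [ht]
      simp only [vmap, if_pos hk, this]
    · -- g acts componentwise as u
      intro i k
      show g i k = vmap I Δ g k i i k
      simp [vmap]
  · rintro ⟨u, hcls, hAp, hfix, hrho, hact⟩ D hD i i' hii j hj
    have hDj : D ∈ fstD Δ j := Finset.mem_filter.mpr ⟨hD, hj⟩
    have h1 : u j i = u j i' := by
      refine hAp j i i' (fun k hk => ?_)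
      have hss : fstD Δ j ⊂ fstD Δ k := (Finset.mem_filter.mp hk).2
      exact hii k (Finset.mem_filter.mp (hss.subset hDj)).2
    have h2 : u j i' i j = u j i' i' j := by
      refine hrho j i' i i' (fun k hk => ?_) j rfl
      have hDk : D ∈ fstD Δ k := by rw [hk]; exact hDj
      exact hii k (Finset.mem_filter.mp hDk).2
    calc g i j = u j i i j := hact i j
      _ = u j i' i j := by rw [h1]
      _ = u j i' i' j := h2
      _ = g i' j := (hact i' j).symm


end Hier
end
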